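/- Let B be a convex bounded set in ℝ^2, let x ∈ B, let θ ∈ [0,2π) and φ ∈ (0,π], and let s > 0. If A_{θ,φ}(x,s;B) ∩ ∂B(x;s) ≠ ∅ and s > dist(x, ∂B), then the Lebesgue area of A_{θ,φ}(x,s;B) is at least s · sin(φ/2) · dist(x, ∂B) / 2. -/

import Mathlib

open MeasureTheory Real

noncomputable section

/-- The closed half-cone in `ℝ^2` of angle `φ` with vertex `x`, whose boundary
rays from `x` are at angles `θ` and `θ + φ`, measured anticlockwise from the
upwards vertical direction `(0,1)` (the direction at angle `ψ` being
`(-sin ψ, cos ψ)`). -/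
def cone2 (θ φ : ℝ) (x : EuclideanSpace ℝ (Fin 2)) : Set (EuclideanSpace ℝ (Fin 2)) :=
  {y | ∃ r : ℝ, 0 ≤ r ∧ ∃ ψ ∈ Set.Icc θ (θ + φ),
    y = x + r • (EuclideanSpace.equiv (Fin 2) ℝ).symm ![-(Real.sin ψ), Real.cos ψ]}

/-- `dist(x, ∂B) = sup {r : B(x;r) ⊆ B}`, the inradius of `B` at `x`. -/
def distToBoundary (x : EuclideanSpace ℝ (Fin 2)) (B : Set (EuclideanSpace ℝ (Fin 2))) : ℝ :=
  sSup {r : ℝ | Metric.closedBall x r ⊆ B}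

def dirVec (ψ : ℝ) : EuclideanSpace ℝ (Fin 2) :=
  (EuclideanSpace.equiv (Fin 2) ℝ).symm ![-(Real.sin ψ), Real.cos ψ]

lemma dirVec_apply0 (ψ : ℝ) : dirVec ψ 0 = -(Real.sin ψ) := rfl
lemma dirVec_apply1 (ψ : ℝ) : dirVec ψ 1 = Real.cos ψ := rfl

lemma norm_dirVec (ψ : ℝ) : ‖dirVec ψ‖ = 1 := by
  rw [EuclideanSpace.norm_eq, Fin.sum_univ_two, dirVec_apply0, dirVec_apply1]
  simp only [Real.norm_eq_abs, sq_abs]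
  rw [show (-Real.sin ψ)^2 + Real.cos ψ ^2 = 1 by
    rw [neg_pow]; simpa using Real.sin_sq_add_cos_sq ψ]
  exact Real.sqrt_one

-- key angle lemma
lemma exists_angle (θ φ : ℝ) (hφ0 : 0 < φ) (hφπ : φ ≤ π) (a b : ℝ) (hV : ¬(a = 0 ∧ b = 0))
    (hA : 0 ≤ -(a * Real.cos θ) - b * Real.sin θ)
    (hB : 0 ≤ a * Real.cos (θ + φ) + b * Real.sin (θ + φ)) :
    ∃ ψ ∈ Set.Icc θ (θ + φ), a = -(Real.sqrt (a^2+b^2) * Real.sin ψ)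
      ∧ b = Real.sqrt (a^2+b^2) * Real.cos ψ := by
  set n := Real.sqrt (a^2+b^2) with hn
  set c : ℂ := ⟨b, a⟩ with hc
  have hc0 : c ≠ 0 := by
    simp only [hc, ne_eq, Complex.ext_iff, Complex.zero_re, Complex.zero_im]
    tauto
  set w : ℂ := c * Complex.exp (θ * Complex.I) with hw
  have hw0 : w ≠ 0 := mul_ne_zero hc0 (Complex.exp_ne_zero _)
  have habsw : ‖w‖ = n := by
    rw [hw, norm_mul, Complex.norm_exp_ofReal_mul_I]
    rw [Complex.norm_def, hn]
    congr 1
    simp [hc, Complex.normSq_mk]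
    ring
  -- w in terms of arg
  set β := w.arg with hβ
  have hwre : w.re = b * Real.cos θ - a * Real.sin θ := by
    simp [hw, hc, Complex.exp_ofReal_mul_I_re, Complex.exp_ofReal_mul_I_im, Complex.mul_re]
  have hwim : w.im = b * Real.sin θ + a * Real.cos θ := by
    simp [hw, hc, Complex.exp_ofReal_mul_I_re, Complex.exp_ofReal_mul_I_im, Complex.mul_im]
  have him : w.im ≤ 0 := by rw [hwim]; linarith
  have hn0 : 0 < n := by
    rw [← habsw]; exact (norm_pos_iff.mpr hw0)
  have hβlepi : β ≤ π := Complex.arg_le_pi w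
  have hβgt : -π < β := Complex.neg_pi_lt_arg w
  have hsinβ : Real.sin β ≤ 0 := by
    rw [hβ, Complex.sin_arg]
    exact div_nonpos_of_nonpos_of_nonneg him (norm_nonneg w)
  -- second condition: sin (β + φ) ≥ 0
  have hz2 : (c * Complex.exp ((θ + φ) * Complex.I)).im = b * Real.sin (θ + φ) + a * Real.cos (θ + φ) := by
    simp [hc, ← Complex.ofReal_add, Complex.exp_ofReal_mul_I_re, Complex.exp_ofReal_mul_I_im, Complex.mul_im]
  have hz2' : c * Complex.exp ((θ + φ) * Complex.I) = n * Complex.exp ((β + φ) * Complex.I) := by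
    have hwe : w = (n : ℂ) * Complex.exp (β * Complex.I) := by
      rw [hβ, ← habsw]
      exact (Complex.norm_mul_exp_arg_mul_I w).symm
    have : c = (n : ℂ) * Complex.exp (β * Complex.I) * Complex.exp (-(θ * Complex.I)) := by
      rw [← hwe, hw, mul_assoc, ← Complex.exp_add]
      simp
    rw [this, mul_assoc, mul_assoc, ← Complex.exp_add, ← Complex.exp_add]
    push_cast
    ring_nf
  have hsinβφ : 0 ≤ Real.sin (β + φ) := by
    have h1 : ((n : ℂ) * Complex.exp ((β + φ) * Complex.I)).im = n * Real.sin (β + φ) := by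
      simp [← Complex.ofReal_add, Complex.exp_ofReal_mul_I_im, Complex.mul_im]
    have := hz2; rw [hz2', h1] at this
    nlinarith
  -- c in terms of β
  have hcn : c = (n : ℂ) * Complex.exp ((β - θ) * Complex.I) := by
    have hwe : w = (n : ℂ) * Complex.exp (β * Complex.I) := by
      rw [hβ, ← habsw]
      exact (Complex.norm_mul_exp_arg_mul_I w).symm
    have : c = (n : ℂ) * Complex.exp (β * Complex.I) * Complex.exp (-(θ * Complex.I)) := by
      rw [← hwe, hw, mul_assoc, ← Complex.exp_add]
      simp
    rw [this, mul_assoc, ← Complex.exp_add]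
    push_cast
    ring_nf
  have ha' : a = n * Real.sin (β - θ) := by
    have := congrArg Complex.im hcn
    simpa [hc, ← Complex.ofReal_sub, Complex.exp_ofReal_mul_I_im, Complex.mul_im] using this
  have hb' : b = n * Real.cos (β - θ) := by
    have := congrArg Complex.re hcn
    simpa [hc, ← Complex.ofReal_sub, Complex.exp_ofReal_mul_I_re, Complex.mul_re] using this
  rcases eq_or_lt_of_le hβlepi with hβpi | hβlt
  · -- β = π, then φ = π
    have hφeq : φ = π := by
      by_contra h
      have hφlt : φ < π := lt_of_le_of_ne hφπ h
      have : Real.sin (β + φ) = -Real.sin φ := by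
        rw [hβpi]; rw [add_comm, Real.sin_add_pi]
      have hsφ : 0 < Real.sin φ := Real.sin_pos_of_pos_of_lt_pi hφ0 hφlt
      rw [this] at hsinβφ; linarith
    refine ⟨θ + π, ⟨by linarith, by rw [hφeq]⟩, ?_, ?_⟩
    · rw [ha', hβpi]
      rw [show π - θ = -(θ + π) + 2*π by ring, Real.sin_add_two_pi, Real.sin_neg]
      ring
    · rw [hb', hβpi]
      rw [show π - θ = -(θ + π) + 2*π by ring, Real.cos_add_two_pi, Real.cos_neg]
  · -- β < π
    have hβle0 : β ≤ 0 := by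
      by_contra h
      push_neg at h
      exact absurd hsinβ (not_le.mpr (Real.sin_pos_of_pos_of_lt_pi h hβlt))
    have hβgeφ : -φ ≤ β := by
      by_contra h
      push_neg at h
      have h1 : β + φ < 0 := by linarith
      have h2 : -π < β + φ := by linarith
      exact absurd hsinβφ (not_le.mpr (Real.sin_neg_of_neg_of_neg_pi_lt h1 h2))
    refine ⟨θ - β, ⟨by linarith, by linarith⟩, ?_, ?_⟩
    · rw [ha', show β - θ = -(θ - β) by ring, Real.sin_neg]; ring
    · rw [hb', show β - θ = -(θ - β) by ring, Real.cos_neg]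

lemma mem_cone2_of (θ φ : ℝ) (hφ0 : 0 < φ) (hφπ : φ ≤ π) (x V : EuclideanSpace ℝ (Fin 2))
    (hA : 0 ≤ -(V 0 * Real.cos θ) - V 1 * Real.sin θ)
    (hB : 0 ≤ V 0 * Real.cos (θ + φ) + V 1 * Real.sin (θ + φ)) :
    x + V ∈ cone2 θ φ x := by
  by_cases hV : V 0 = 0 ∧ V 1 = 0
  · refine ⟨0, le_refl 0, θ, ⟨le_refl θ, by linarith⟩, ?_⟩
    have : V = 0 := by
      ext i
      fin_cases i
      · exact hV.1
      · exact hV.2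
    rw [this]
    simp
  · obtain ⟨ψ, hψ, ha, hb⟩ := exists_angle θ φ hφ0 hφπ (V 0) (V 1) hV hA hB
    refine ⟨Real.sqrt ((V 0)^2 + (V 1)^2), Real.sqrt_nonneg _, ψ, hψ, ?_⟩
    congr 1
    refine PiLp.ext fun i => ?_
    rw [PiLp.smul_apply, smul_eq_mul]
    fin_cases i
    · show V 0 = _ * (-(Real.sin ψ))
      linear_combination ha
    · show V 1 = _ * (Real.cos ψ)
      linear_combination hb

def mapUV (u v : EuclideanSpace ℝ (Fin 2)) : EuclideanSpace ℝ (Fin 2) →ₗ[ℝ] EuclideanSpace ℝ (Fin 2) where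
  toFun p := p 0 • u + p 1 • v
  map_add' p q := by
    simp only [PiLp.add_apply, add_smul]
    abel
  map_smul' c p := by
    simp only [PiLp.smul_apply, smul_eq_mul, RingHom.id_apply, smul_add, smul_smul]

lemma det_mapUV (u v : EuclideanSpace ℝ (Fin 2)) :
    LinearMap.det (mapUV u v) = u 0 * v 1 - v 0 * u 1 := by
  have hb := (EuclideanSpace.basisFun (Fin 2) ℝ).toBasis
  rw [← LinearMap.det_toMatrix (EuclideanSpace.basisFun (Fin 2) ℝ).toBasis]
  rw [Matrix.det_fin_two]
  have key : ∀ i j : Fin 2, (LinearMap.toMatrix (EuclideanSpace.basisFun (Fin 2) ℝ).toBasis (EuclideanSpace.basisFun (Fin 2) ℝ).toBasis (mapUV u v)) i j = (if j = 0 then u else v) i := by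
    intro i j
    rw [LinearMap.toMatrix_apply]
    fin_cases j <;>
      simp [EuclideanSpace.basisFun_apply, EuclideanSpace.single_apply, show ∀ p, mapUV u v p = p 0 • u + p 1 • v from fun _ => rfl]
  rw [key 0 0, key 0 1, key 1 0, key 1 1]
  norm_num

def stdTri : Set (EuclideanSpace ℝ (Fin 2)) :=
  {p | 0 ≤ p 0 ∧ 0 ≤ p 1 ∧ p 0 + p 1 ≤ 1}

lemma half_le_volume_stdTri : ENNReal.ofReal (1/2) ≤ volume stdTri := by
  set m := (MeasurableEquiv.toLp 2 (Fin 2 → ℝ)).symm.trans (MeasurableEquiv.finTwoArrow) with hm_def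
  have hm : MeasurePreserving m :=
    (volume_preserving_finTwoArrow ℝ).comp (EuclideanSpace.volume_preserving_symm_measurableEquiv_toLp (Fin 2))
  set R := regionBetween (fun _ : ℝ => (0:ℝ)) (fun a => 1 - a) (Set.Ioo 0 1) with hR_def
  have hRmeas : MeasurableSet R :=
    measurableSet_regionBetween measurable_const (measurable_const.sub measurable_id) measurableSet_Ioo
  have hsub : m ⁻¹' R ⊆ stdTri := by
    intro p hp
    have hmp : m p = (p 0, p 1) := rfl
    have : (p 0, p 1) ∈ R := by rw [← hmp]; exact hp
    obtain ⟨h1, h2⟩ := this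
    simp only [Set.mem_Ioo] at h1 h2
    exact ⟨le_of_lt h1.1, le_of_lt h2.1, by linarith [h2.2]⟩
  have hvolR : volume R = ENNReal.ofReal (1/2) := by
    have hint1 : IntegrableOn (fun _ : ℝ => (0:ℝ)) (Set.Ioo 0 1) volume := (integrableOn_const_iff).mpr (Or.inr (by simp))
    have hint2 : IntegrableOn (fun a : ℝ => 1 - a) (Set.Ioo 0 1) volume := by
      exact ((continuous_const.sub continuous_id).integrableOn_Icc.mono Set.Ioo_subset_Icc_self le_rfl : IntegrableOn _ (Set.Ioo (0:ℝ) 1) volume)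
    have := volume_regionBetween_eq_integral hint1 hint2 measurableSet_Ioo
      (fun a ha => by simp only [Set.mem_Ioo] at ha; linarith [ha.2])
    rw [← Measure.volume_eq_prod] at this
    rw [hR_def, this]
    congr 1
    have heq : (((fun a : ℝ => 1 - a) - fun _ : ℝ => (0:ℝ)) : ℝ → ℝ) = fun y : ℝ => 1 - y := by
      funext y; simp
    rw [show (∫ y in Set.Ioo (0:ℝ) 1, ((fun a : ℝ => 1 - a) - fun _ : ℝ => (0:ℝ)) y) = ∫ y in Set.Ioo (0:ℝ) 1, (1 - y) by rw [heq]]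
    rw [← integral_Ioc_eq_integral_Ioo, ← intervalIntegral.integral_of_le (by norm_num : (0:ℝ) ≤ 1)]
    rw [intervalIntegral.integral_sub intervalIntegrable_const intervalIntegral.intervalIntegrable_id]
    rw [intervalIntegral.integral_const, integral_id]
    norm_num
  calc ENNReal.ofReal (1/2) = volume R := hvolR.symm
    _ = volume (m ⁻¹' R) := (hm.measure_preimage hRmeas.nullMeasurableSet).symm
    _ ≤ volume stdTri := measure_mono hsub

lemma convex_aux (B : Set (EuclideanSpace ℝ (Fin 2))) (hBconv : Convex ℝ B)
    (x z w : EuclideanSpace ℝ (Fin 2)) (hx : x ∈ B) (hz : z ∈ B) (hw : w ∈ B)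
    (a b : ℝ) (ha : 0 ≤ a) (hb : 0 ≤ b) (hab : a + b ≤ 1) :
    x + (a • (z - x) + b • (w - x)) ∈ B := by
  have := hBconv.sum_mem (t := Finset.univ) (w := ![1 - a - b, a, b]) (z := ![x, z, w])
    (fun i _ => by fin_cases i <;> simp <;> linarith)
    (by simp [Fin.sum_univ_three]; ring)
    (fun i _ => by fin_cases i <;> simpa)
  rw [Fin.sum_univ_three] at this
  simp only [Matrix.cons_val_zero, Matrix.cons_val_one, Matrix.head_cons,
    Matrix.cons_val_two, Matrix.tail_cons] at this
  convert this using 1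
  module

open Pointwise in
/-- If `B ⊂ ℝ^2` is convex and bounded, `x ∈ B`, and the region
`A_{θ,φ}(x,s;B) = B(x;s) ∩ B ∩ C_{θ,φ}(x)` meets the sphere `∂B(x;s)`, with
`s > dist(x,∂B)`, then the area of `A_{θ,φ}(x,s;B)` is at least
`s sin(φ/2) dist(x,∂B) / 2`. -/
theorem coneRegionAreaLowerBound
    (B : Set (EuclideanSpace ℝ (Fin 2))) (hBconv : Convex ℝ B)
    (hBbdd : Bornology.IsBounded B)
    (x : EuclideanSpace ℝ (Fin 2)) (hx : x ∈ B)
    (θ φ s : ℝ) (hθ0 : 0 ≤ θ) (hθ2 : θ < 2 * π) (hφ0 : 0 < φ) (hφπ : φ ≤ π)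
    (hs : 0 < s)
    (hmeet : ((Metric.closedBall x s ∩ B ∩ cone2 θ φ x) ∩ Metric.sphere x s).Nonempty)
    (hsd : distToBoundary x B < s) :
    ENNReal.ofReal (s * Real.sin (φ / 2) * distToBoundary x B / 2) ≤
      volume (Metric.closedBall x s ∩ B ∩ cone2 θ φ x) := by
  have hsin2 : 0 < Real.sin (φ / 2) :=
    Real.sin_pos_of_pos_of_lt_pi (by linarith) (by linarith [Real.pi_pos])
  set d := distToBoundary x B with hd_def
  set A := Metric.closedBall x s ∩ B ∩ cone2 θ φ x with hA_def
  rcases le_or_gt d 0 with hd0 | hd0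
  · rw [ENNReal.ofReal_eq_zero.mpr (by nlinarith [mul_pos hs hsin2])]
    exact zero_le
  have hAne : volume A ≠ ⊤ := by
    have hsub : A ⊆ Metric.closedBall x s := fun y hy => hy.1.1
    exact ne_top_of_le_ne_top (MeasureTheory.measure_closedBall_lt_top).ne (measure_mono hsub)
  have key : ∀ d' : ℝ, 0 < d' → d' < d →
      ENNReal.ofReal (s * Real.sin (φ / 2) * d' / 2) ≤ volume A := by
    intro d' hd'0 hd'd
    have hd's : d' < s := by linarith
    have hball : Metric.closedBall x d' ⊆ B := by
      have hne : {r : ℝ | Metric.closedBall x r ⊆ B}.Nonempty := by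
        refine ⟨0, ?_⟩
        intro y hy
        have : y = x := by
          have := Metric.mem_closedBall.mp hy
          have : dist y x = 0 := le_antisymm this dist_nonneg
          exact dist_eq_zero.mp this
        rwa [this]
      obtain ⟨r, hrmem, hd'r⟩ := exists_lt_of_lt_csSup hne (hd_def ▸ hd'd)
      exact (Metric.closedBall_subset_closedBall hd'r.le).trans hrmem
    obtain ⟨z, hzA, hzS⟩ := hmeet
    obtain ⟨hz1, hz2⟩ := hzA
    obtain ⟨r, hr0, ψ1, hψ1, hzeq⟩ := hz2
    have hznorm : ‖z - x‖ = s := by rwa [mem_sphere_iff_norm] at hzS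
    have hzx : z - x = r • dirVec ψ1 := by rw [hzeq]; exact add_sub_cancel_left x _
    have hrs : r = s := by
      have h := hznorm
      rw [hzx, norm_smul, norm_dirVec, Real.norm_eq_abs, mul_one, abs_of_nonneg hr0] at h
      exact h
    set ψ2 := if ψ1 ≤ θ + φ / 2 then ψ1 + φ / 2 else ψ1 - φ / 2 with hψ2def
    have hψ2 : ψ2 ∈ Set.Icc θ (θ + φ) := by
      obtain ⟨h1, h2⟩ := hψ1
      rw [hψ2def]; split_ifs with h <;> constructor <;> linarith
    have habs : |Real.sin (ψ2 - ψ1)| = Real.sin (φ / 2) := by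
      rw [hψ2def]; split_ifs with h
      · rw [show ψ1 + φ / 2 - ψ1 = φ / 2 by ring, abs_of_pos hsin2]
      · rw [show ψ1 - φ / 2 - ψ1 = -(φ / 2) by ring, Real.sin_neg, abs_neg, abs_of_pos hsin2]
    set u := z - x with hu_def
    have hu : u = s • dirVec ψ1 := by rw [hzx, hrs]
    set v := d' • dirVec ψ2 with hv_def
    have hu0 : u 0 = s * (-(Real.sin ψ1)) := by rw [hu]; rfl
    have hu1 : u 1 = s * Real.cos ψ1 := by rw [hu]; rfl
    have hv0 : v 0 = d' * (-(Real.sin ψ2)) := rfl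
    have hv1 : v 1 = d' * Real.cos ψ2 := rfl
    have hunorm : ‖u‖ = s := hznorm
    have hvnorm : ‖v‖ = d' := by
      rw [hv_def, norm_smul, norm_dirVec, Real.norm_eq_abs, mul_one, abs_of_pos hd'0]
    set f := mapUV u v with hf_def
    have hdet : |LinearMap.det f| = s * d' * Real.sin (φ / 2) := by
      rw [hf_def, det_mapUV, hu0, hu1, hv0, hv1,
        show s * -Real.sin ψ1 * (d' * Real.cos ψ2) - d' * -Real.sin ψ2 * (s * Real.cos ψ1)
          = s * d' * Real.sin (ψ2 - ψ1) by rw [Real.sin_sub]; ring,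
        abs_mul, abs_of_pos (by positivity : (0:ℝ) < s * d'), habs]
    have hwB : x + v ∈ B := by
      apply hball
      rw [Metric.mem_closedBall, dist_eq_norm, add_sub_cancel_left, hvnorm]
    have hT : (fun y => x + y) '' (f '' stdTri) ⊆ A := by
      rintro y ⟨V, ⟨p, hp, rfl⟩, rfl⟩
      obtain ⟨hp0, hp1, hps⟩ := hp
      have hfp : f p = p 0 • u + p 1 • v := rfl
      have hfp0 : (f p) 0 = p 0 * u 0 + p 1 * v 0 := rfl
      have hfp1 : (f p) 1 = p 0 * u 1 + p 1 * v 1 := rfl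
      refine ⟨⟨?_, ?_⟩, ?_⟩
      · rw [Metric.mem_closedBall, dist_eq_norm, add_sub_cancel_left]
        calc ‖f p‖ ≤ p 0 * ‖u‖ + p 1 * ‖v‖ := by
              rw [hfp]
              refine (norm_add_le _ _).trans ?_
              rw [norm_smul, norm_smul, Real.norm_eq_abs, Real.norm_eq_abs,
                abs_of_nonneg hp0, abs_of_nonneg hp1]
          _ ≤ s := by rw [hunorm, hvnorm]; nlinarith
      · have hmem := convex_aux B hBconv x z (x + v) hx hz1.2 hwB (p 0) (p 1) hp0 hp1 hps
        have hveq : (x + v) - x = v := add_sub_cancel_left x v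
        rw [hveq] at hmem
        rw [show f p = p 0 • (z - x) + p 1 • v from rfl]
        exact hmem
      · apply mem_cone2_of θ φ hφ0 hφπ x (f p)
        · have e1 : -((f p) 0 * Real.cos θ) - (f p) 1 * Real.sin θ
              = p 0 * s * Real.sin (ψ1 - θ) + p 1 * d' * Real.sin (ψ2 - θ) := by
            rw [hfp0, hfp1, hu0, hu1, hv0, hv1, Real.sin_sub, Real.sin_sub]; ring
          rw [e1]
          have s1 : 0 ≤ Real.sin (ψ1 - θ) :=
            Real.sin_nonneg_of_nonneg_of_le_pi (by linarith [hψ1.1]) (by linarith [hψ1.2])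
          have s2 : 0 ≤ Real.sin (ψ2 - θ) :=
            Real.sin_nonneg_of_nonneg_of_le_pi (by linarith [hψ2.1]) (by linarith [hψ2.2])
          have := mul_nonneg (mul_nonneg hp0 hs.le) s1
          have := mul_nonneg (mul_nonneg hp1 hd'0.le) s2
          linarith
        · have e2 : (f p) 0 * Real.cos (θ + φ) + (f p) 1 * Real.sin (θ + φ)
              = p 0 * s * Real.sin ((θ + φ) - ψ1) + p 1 * d' * Real.sin ((θ + φ) - ψ2) := by
            rw [hfp0, hfp1, hu0, hu1, hv0, hv1, Real.sin_sub, Real.sin_sub]; ring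
          rw [e2]
          have s1 : 0 ≤ Real.sin ((θ + φ) - ψ1) :=
            Real.sin_nonneg_of_nonneg_of_le_pi (by linarith [hψ1.2]) (by linarith [hψ1.1])
          have s2 : 0 ≤ Real.sin ((θ + φ) - ψ2) :=
            Real.sin_nonneg_of_nonneg_of_le_pi (by linarith [hψ2.2]) (by linarith [hψ2.1])
          have := mul_nonneg (mul_nonneg hp0 hs.le) s1
          have := mul_nonneg (mul_nonneg hp1 hd'0.le) s2
          linarith
    calc ENNReal.ofReal (s * Real.sin (φ / 2) * d' / 2)
        = ENNReal.ofReal (s * d' * Real.sin (φ / 2)) * ENNReal.ofReal (1 / 2) := by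
          rw [← ENNReal.ofReal_mul (by positivity)]
          congr 1
          ring
      _ ≤ ENNReal.ofReal |LinearMap.det f| * volume stdTri := by
          rw [hdet]
          exact mul_le_mul_right half_le_volume_stdTri _
      _ = volume (⇑f '' stdTri) := (volume.addHaar_image_linearMap f stdTri).symm
      _ = volume ((fun y => x + y) '' (⇑f '' stdTri)) := by
          have : (fun y => x + y) '' (⇑f '' stdTri) = x +ᵥ (⇑f '' stdTri) := rfl
          rw [this, measure_vadd volume x _]
      _ ≤ volume A := measure_mono hT
  have hfin : s * Real.sin (φ / 2) * d / 2 ≤ (volume A).toReal := by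
    refine le_of_forall_lt fun c hc => ?_
    rcases lt_or_ge c 0 with hc0 | hc0
    · exact hc0.trans_le ENNReal.toReal_nonneg
    · set K := s * Real.sin (φ / 2) / 2 with hK
      have hK0 : 0 < K := by positivity
      have hcK : c / K < d := by
        rw [div_lt_iff₀ hK0]
        nlinarith
      set d' := (c / K + d) / 2 with hd'
      have hck0 : 0 ≤ c / K := by positivity
      have hd'0 : 0 < d' := by rw [hd']; linarith
      have hd'd : d' < d := by rw [hd']; linarith
      have h1 : c / K < d' := by rw [hd']; linarith
      have h2 := key d' hd'0 hd'd
      have h3 : s * Real.sin (φ / 2) * d' / 2 ≤ (volume A).toReal := by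
        have := ENNReal.toReal_mono hAne h2
        rwa [ENNReal.toReal_ofReal (by positivity)] at this
      calc c = K * (c / K) := by field_simp
        _ < K * d' := mul_lt_mul_of_pos_left h1 hK0
        _ = s * Real.sin (φ / 2) * d' / 2 := by rw [hK]; ring
        _ ≤ _ := h3
  exact ENNReal.ofReal_le_of_le_toReal hfin
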